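/- In the avg-EQ reduction instance built from a simple graph H = (V, E) and an integer k ≥ 4 with |V| + |E| ≥ k², suppose K ⊆ V is a clique of size k in H. Let C consist of the vertex players v' for v ∈ K, the edge players e' for all edges e of H with both endpoints in K, and the incidence players b_{x,e} and b_{y,e} for each such edge e = xy. Then |C| = k + 3·(k choose 2), and under avg-EQ utilities every player i ∈ C satisfies: util_i(C) = ((3k−3)/k)·n − (|C| − 1 − (3k−3)/k) if i is a vertex player, util_i(C) = 2n − (|C| − 3) if i is an edge player, and util_i(C) = ((k+3)/3)·n − (|C| − 1 − (k+3)/3) if i is an incidence player; consequently, C blocks the coalition structure Γ. -/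

import Mathlib

open Finset
open scoped Classical

section AHGDefs

variable {N : Type*} [Fintype N] [DecidableEq N]

/-- The set of friends of player `i` inside coalition `C`. -/
noncomputable def friendsIn (G : SimpleGraph N) (C : Finset N) (i : N) : Finset N :=
  C.filter fun j => G.Adj i j

/-- The friend-oriented valuation of coalition `C` by player `i`:
`val_i(C) = n·|F_i ∩ C| − |E_i ∩ C|`. -/
noncomputable def fval (G : SimpleGraph N) (C : Finset N) (i : N) : ℤ :=
  (Fintype.card N : ℤ) * ((friendsIn G C i).card : ℤ)
    - ((C.filter fun j => ¬ G.Adj i j ∧ j ≠ i).card : ℤ)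

/-- Average-based equal-treatment utility. -/
noncomputable def utilAvgEQ (G : SimpleGraph N) (C : Finset N) (i : N) : ℚ :=
  (∑ c ∈ insert i (friendsIn G C i), (fval G C c : ℚ)) /
    ((insert i (friendsIn G C i)).card : ℚ)

/-- Average-based altruistic-treatment utility with weight `w`. -/
noncomputable def utilAvgAL (G : SimpleGraph N) (w : ℚ) (C : Finset N) (i : N) : ℚ :=
  (fval G C i : ℚ) +
    w * (if (friendsIn G C i).Nonempty then
          (∑ c ∈ friendsIn G C i, (fval G C c : ℚ)) / ((friendsIn G C i).card : ℚ)
         else 0)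

/-- Min-based equal-treatment utility. -/
noncomputable def utilMinEQ (G : SimpleGraph N) (C : Finset N) (i : N) : ℤ :=
  (insert i (friendsIn G C i)).inf' (insert_nonempty _ _) (fval G C)

/-- Min-based altruistic-treatment utility with weight `w`. -/
noncomputable def utilMinAL (G : SimpleGraph N) (w : ℤ) (C : Finset N) (i : N) : ℤ :=
  fval G C i +
    w * (if h : (friendsIn G C i).Nonempty then (friendsIn G C i).inf' h (fval G C) else 0)

/-- A coalition structure (partition of the players), given as the map sending
each player to its coalition. -/
structure CoalitionStructure (N : Type*) [Fintype N] [DecidableEq N] where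
  part : N → Finset N
  mem_part : ∀ i, i ∈ part i
  part_eq : ∀ i j, j ∈ part i → part j = part i

/-- A (nonempty) coalition `C` blocks the coalition structure `Γ`. -/
def Blocks {α : Type*} [LT α] (util : Finset N → N → α) (Γ : CoalitionStructure N)
    (C : Finset N) : Prop :=
  C.Nonempty ∧ ∀ i ∈ C, util (Γ.part i) i < util C i

/-- Core stability: no nonempty coalition blocks `Γ`. -/
def CoreStable {α : Type*} [LT α] (util : Finset N → N → α)
    (Γ : CoalitionStructure N) : Prop :=
  ¬ ∃ C : Finset N, Blocks util Γ C

/-- The base clique of a `(d,k')`-dome gadget on `P` with top player `top`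
and mid players `mid`. -/
noncomputable def domeBase {d : ℕ} (P : Finset N) (top : N) (mid : Fin d → N) : Finset N :=
  P \ insert top (Finset.univ.image mid)

/-- `P` carries a `(d,k')`-dome gadget of the graph `G`, with top player `top`,
mid players `mid i` and fringe players `fringe i`. -/
structure IsDomeGadget (G : SimpleGraph N) (d k' : ℕ) (P : Finset N) (top : N)
    (mid fringe : Fin d → N) : Prop where
  card_eq : P.card = k'
  top_mem : top ∈ P
  mid_mem : ∀ i, mid i ∈ P
  mid_inj : Function.Injective mid
  mid_ne_top : ∀ i, mid i ≠ top
  fringe_mem : ∀ i, fringe i ∈ domeBase P top mid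
  fringe_inj : Function.Injective fringe
  adj_iff : ∀ x ∈ P, ∀ y ∈ P, (G.Adj x y ↔
    ((x = top ∧ ∃ i, y = mid i) ∨ (y = top ∧ ∃ i, x = mid i) ∨
     (x ∈ domeBase P top mid ∧ y ∈ domeBase P top mid ∧ x ≠ y) ∨
     (∃ i, (x = mid i ∧ y = fringe i) ∨ (y = mid i ∧ x = fringe i))))

/-- `P` carries a `(d,k')`-dome gadget with top player `top` (mid and fringe
players existentially quantified). -/
def HasDomeGadget (G : SimpleGraph N) (d k' : ℕ) (P : Finset N) (top : N) : Prop :=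
  ∃ mid fringe : Fin d → N, IsDomeGadget G d k' P top mid fringe

/-- The gadget size `k' = k + 3·(k choose 2) + 1` of the average-based reductions. -/
def avgK' (k : ℕ) : ℕ := k + 3 * Nat.choose k 2 + 1

variable {V : Type*} [Fintype V] [DecidableEq V]

/-- `Γ` is the coalition structure of the average-based reduction instances: its
coalitions are exactly the gadget player sets. -/
def IsAvgGamma (H : SimpleGraph V) (Pv : V → Finset N) (Pe : Sym2 V → Finset N)
    (Pve : V → Sym2 V → Finset N) (Γ : CoalitionStructure N) : Prop :=
  (∀ v : V, ∀ i ∈ Pv v, Γ.part i = Pv v) ∧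
  (∀ e ∈ H.edgeSet, ∀ i ∈ Pe e, Γ.part i = Pe e) ∧
  (∀ (v : V), ∀ e ∈ H.edgeSet, v ∈ e → ∀ i ∈ Pve v e, Γ.part i = Pve v e)

/-- The avg-EQ reduction instance built from the graph `H` and `k ≥ 4`:
`G` is the constructed network of friends; `Pv v` carries a `(k−1,k')`-dome gadget
with top player `vp v`, `Pe e` a `(2,k')`-dome gadget with top player `ep e`, and
`Pve v e` a `(2,k')`-dome gadget with top player `bp v e`. Each `bp v e` is further
adjacent to `vp v` and `ep e`, and there are no other edges. -/
structure AvgEQReduction (H : SimpleGraph V) (k : ℕ) (G : SimpleGraph N)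
    (Pv : V → Finset N) (Pe : Sym2 V → Finset N) (Pve : V → Sym2 V → Finset N)
    (vp : V → N) (ep : Sym2 V → N) (bp : V → Sym2 V → N) : Prop where
  dome_v : ∀ v : V, HasDomeGadget G (k - 1) (avgK' k) (Pv v) (vp v)
  dome_e : ∀ e ∈ H.edgeSet, HasDomeGadget G 2 (avgK' k) (Pe e) (ep e)
  dome_ve : ∀ (v : V), ∀ e ∈ H.edgeSet, v ∈ e →
    HasDomeGadget G 2 (avgK' k) (Pve v e) (bp v e)
  disj_vv : ∀ v w : V, v ≠ w → Disjoint (Pv v) (Pv w)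
  disj_ee : ∀ e ∈ H.edgeSet, ∀ f ∈ H.edgeSet, e ≠ f → Disjoint (Pe e) (Pe f)
  disj_bb : ∀ (v : V), ∀ e ∈ H.edgeSet, v ∈ e → ∀ (w : V), ∀ f ∈ H.edgeSet, w ∈ f →
    (v, e) ≠ (w, f) → Disjoint (Pve v e) (Pve w f)
  disj_v_e : ∀ (v : V), ∀ e ∈ H.edgeSet, Disjoint (Pv v) (Pe e)
  disj_v_b : ∀ (v w : V), ∀ f ∈ H.edgeSet, w ∈ f → Disjoint (Pv v) (Pve w f)
  disj_e_b : ∀ e ∈ H.edgeSet, ∀ (w : V), ∀ f ∈ H.edgeSet, w ∈ f →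
    Disjoint (Pe e) (Pve w f)
  cover : ∀ x : N, (∃ v : V, x ∈ Pv v) ∨ (∃ e ∈ H.edgeSet, x ∈ Pe e) ∨
    (∃ (v : V), ∃ e ∈ H.edgeSet, v ∈ e ∧ x ∈ Pve v e)
  adj_bv : ∀ (v : V), ∀ e ∈ H.edgeSet, v ∈ e → G.Adj (bp v e) (vp v)
  adj_be : ∀ (v : V), ∀ e ∈ H.edgeSet, v ∈ e → G.Adj (bp v e) (ep e)
  adj_cases : ∀ x y : N, G.Adj x y →
    (∃ v : V, x ∈ Pv v ∧ y ∈ Pv v) ∨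
    (∃ e ∈ H.edgeSet, x ∈ Pe e ∧ y ∈ Pe e) ∨
    (∃ (v : V), ∃ e ∈ H.edgeSet, v ∈ e ∧ x ∈ Pve v e ∧ y ∈ Pve v e) ∨
    (∃ (v : V), ∃ e ∈ H.edgeSet, v ∈ e ∧
      ((x = bp v e ∧ y = vp v) ∨ (y = bp v e ∧ x = vp v))) ∨
    (∃ (v : V), ∃ e ∈ H.edgeSet, v ∈ e ∧
      ((x = bp v e ∧ y = ep e) ∨ (y = bp v e ∧ x = ep e)))
end AHGDefs

set_option linter.unusedSectionVars false
section Helpers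
variable {N : Type*} [Fintype N] [DecidableEq N]

lemma mem_friendsIn {G : SimpleGraph N} {C : Finset N} {i j : N} :
    j ∈ friendsIn G C i ↔ j ∈ C ∧ G.Adj i j := by simp [friendsIn]

lemma card_split (G : SimpleGraph N) (C : Finset N) (i : N) (hi : i ∈ C) :
    C.card = (friendsIn G C i).card + (C.filter fun j => ¬ G.Adj i j ∧ j ≠ i).card + 1 := by
  classical
  have h1 : (C.filter fun j => G.Adj i j).card + (C.filter fun j => ¬ G.Adj i j).card = C.card :=
    Finset.card_filter_add_card_filter_not _
  have h2 : (C.filter fun j => ¬ G.Adj i j) = insert i (C.filter fun j => ¬ G.Adj i j ∧ j ≠ i) := by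
    ext j
    simp only [Finset.mem_filter, Finset.mem_insert]
    constructor
    · rintro ⟨hj, hadj⟩
      by_cases hji : j = i
      · exact Or.inl hji
      · exact Or.inr ⟨hj, hadj, hji⟩
    · rintro (rfl | ⟨hj, hadj, hji⟩)
      · exact ⟨hi, fun h => G.irrefl h⟩
      · exact ⟨hj, hadj⟩
  have h3 : i ∉ (C.filter fun j => ¬ G.Adj i j ∧ j ≠ i) := by simp
  rw [h2, Finset.card_insert_of_notMem h3] at h1
  unfold friendsIn
  omega

lemma fval_eq_of_mem (G : SimpleGraph N) (C : Finset N) (i : N) (hi : i ∈ C) :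
    fval G C i = (Fintype.card N : ℤ) * ((friendsIn G C i).card : ℤ)
      - ((C.card : ℤ) - 1 - ((friendsIn G C i).card : ℤ)) := by
  have := card_split G C i hi
  unfold fval
  have h : ((C.filter fun j => ¬ G.Adj i j ∧ j ≠ i).card : ℤ)
      = (C.card : ℤ) - 1 - ((friendsIn G C i).card : ℤ) := by
    have : (C.card : ℤ) = ((friendsIn G C i).card : ℤ)
        + ((C.filter fun j => ¬ G.Adj i j ∧ j ≠ i).card : ℤ) + 1 := by exact_mod_cast this
    linarith
  rw [h]

lemma dome_friends_top {G : SimpleGraph N} {d k' : ℕ} {P : Finset N} {top : N}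
    {mid fringe : Fin d → N} (h : IsDomeGadget G d k' P top mid fringe) :
    friendsIn G P top = Finset.univ.image mid := by
  have hbase_top : top ∉ domeBase P top mid := by simp [domeBase]
  ext y
  simp only [mem_friendsIn, Finset.mem_image, Finset.mem_univ, true_and]
  constructor
  · rintro ⟨hyP, hadj⟩
    rw [h.adj_iff top h.top_mem y hyP] at hadj
    rcases hadj with ⟨-, i, hy⟩ | ⟨-, i, htop⟩ | ⟨hb, -, -⟩ | ⟨i, ⟨h1, -⟩ | ⟨-, h2⟩⟩
    · exact ⟨i, hy.symm⟩
    · exact absurd htop.symm (h.mid_ne_top i)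
    · exact absurd hb hbase_top
    · exact absurd h1.symm (h.mid_ne_top i)
    · have := h.fringe_mem i
      rw [← h2] at this
      exact absurd this hbase_top
  · rintro ⟨i, rfl⟩
    refine ⟨h.mid_mem i, ?_⟩
    rw [h.adj_iff top h.top_mem (mid i) (h.mid_mem i)]
    exact Or.inl ⟨rfl, i, rfl⟩

lemma dome_fringe_props {G : SimpleGraph N} {d k' : ℕ} {P : Finset N} {top : N}
    {mid fringe : Fin d → N} (h : IsDomeGadget G d k' P top mid fringe) (i : Fin d) :
    fringe i ∈ P ∧ fringe i ≠ top ∧ ∀ j, fringe i ≠ mid j := by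
  have hf := h.fringe_mem i
  simp only [domeBase, Finset.mem_sdiff, Finset.mem_insert, Finset.mem_image,
    Finset.mem_univ, true_and, not_or, not_exists] at hf
  exact ⟨hf.1, hf.2.1, fun j hj => hf.2.2 j hj.symm⟩

lemma dome_friends_mid {G : SimpleGraph N} {d k' : ℕ} {P : Finset N} {top : N}
    {mid fringe : Fin d → N} (h : IsDomeGadget G d k' P top mid fringe) (i : Fin d) :
    friendsIn G P (mid i) = {top, fringe i} := by
  obtain ⟨hfP, hftop, hfmid⟩ := dome_fringe_props h i
  ext y
  simp only [mem_friendsIn, Finset.mem_insert, Finset.mem_singleton]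
  constructor
  · rintro ⟨hyP, hadj⟩
    rw [h.adj_iff (mid i) (h.mid_mem i) y hyP] at hadj
    rcases hadj with ⟨h1, -⟩ | ⟨hy, -⟩ | ⟨hb, -, -⟩ | ⟨j, ⟨h1, h2⟩ | ⟨-, h2⟩⟩
    · exact absurd h1 (h.mid_ne_top i)
    · exact Or.inl hy
    · simp only [domeBase, Finset.mem_sdiff, Finset.mem_insert, Finset.mem_image,
        Finset.mem_univ, true_and, not_or, not_exists] at hb
      exact absurd rfl (hb.2.2 i)
    · have : j = i := h.mid_inj h1.symm  -- h1 : mid i = mid j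
      exact Or.inr (h2.trans (by rw [this]))
    · exact absurd h2.symm ((dome_fringe_props h j).2.2 i)
  · rintro (rfl | rfl)
    · refine ⟨h.top_mem, ?_⟩
      rw [h.adj_iff (mid i) (h.mid_mem i) y h.top_mem]
      exact Or.inr (Or.inl ⟨rfl, i, rfl⟩)
    · refine ⟨hfP, ?_⟩
      rw [h.adj_iff (mid i) (h.mid_mem i) _ hfP]
      exact Or.inr (Or.inr (Or.inr ⟨i, Or.inl ⟨rfl, rfl⟩⟩))

lemma dome_util_top {G : SimpleGraph N} {d k' : ℕ} {P : Finset N} {top : N}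
    (h : HasDomeGadget G d k' P top) :
    utilAvgEQ G P top =
      (((d : ℚ) * (Fintype.card N : ℚ) - ((k' : ℚ) - 1 - (d : ℚ)))
        + (d : ℚ) * (2 * (Fintype.card N : ℚ) - ((k' : ℚ) - 3))) / ((d : ℚ) + 1) := by
  obtain ⟨mid, fringe, hg⟩ := h
  have hft : friendsIn G P top = Finset.univ.image mid := dome_friends_top hg
  have htopnotmem : top ∉ Finset.univ.image mid := by
    simp only [Finset.mem_image, Finset.mem_univ, true_and, not_exists]
    exact fun i hi => hg.mid_ne_top i hi
  have hcard_ft : (Finset.univ.image mid).card = d := by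
    rw [Finset.card_image_of_injective _ hg.mid_inj, Finset.card_univ, Fintype.card_fin]
  have hfvtop : (fval G P top : ℚ)
      = (Fintype.card N : ℚ) * d - ((k' : ℚ) - 1 - d) := by
    have := fval_eq_of_mem G P top hg.top_mem
    rw [hft, hcard_ft, hg.card_eq] at this
    push_cast [this]; ring
  have hfvmid : ∀ i : Fin d, (fval G P (mid i) : ℚ)
      = 2 * (Fintype.card N : ℚ) - ((k' : ℚ) - 3) := by
    intro i
    have hfm := dome_friends_mid hg i
    have hne : top ≠ fringe i := fun hh => (dome_fringe_props hg i).2.1 hh.symm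
    have hc2 : ({top, fringe i} : Finset N).card = 2 := Finset.card_pair hne
    have := fval_eq_of_mem G P (mid i) (hg.mid_mem i)
    rw [hfm, hc2, hg.card_eq] at this
    push_cast [this]; ring
  unfold utilAvgEQ
  rw [hft, Finset.card_insert_of_notMem htopnotmem, hcard_ft,
    Finset.sum_insert htopnotmem, Finset.sum_image (fun a _ b _ hab => hg.mid_inj hab)]
  rw [hfvtop, Finset.sum_congr rfl (fun i _ => hfvmid i), Finset.sum_const,
    Finset.card_univ, Fintype.card_fin]
  push_cast
  ring

end Helpers

/-- In the avg-EQ reduction instance, given a clique `K` of size `k` in `H`, the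
coalition `C` of the vertex players of `K`, the edge players of all edges inside
`K`, and the corresponding incidence players has `|C| = k + 3·(k choose 2)`, yields
the stated avg-EQ utilities for its vertex, edge, and incidence players, and
consequently blocks `Γ`. -/
theorem avgEQ_clique_coalition_blocks {V N : Type*} [Fintype V] [DecidableEq V]
    [Fintype N] [DecidableEq N]
    (H : SimpleGraph V) (k : ℕ) (hk : 4 ≤ k)
    (hsize : k ^ 2 ≤ Fintype.card V + H.edgeFinset.card)
    (G : SimpleGraph N) (Pv : V → Finset N) (Pe : Sym2 V → Finset N)
    (Pve : V → Sym2 V → Finset N)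
    (vp : V → N) (ep : Sym2 V → N) (bp : V → Sym2 V → N)
    (R : AvgEQReduction H k G Pv Pe Pve vp ep bp)
    (Γ : CoalitionStructure N) (hΓ : IsAvgGamma H Pv Pe Pve Γ)
    (K : Finset V) (hK : H.IsNClique k K) :
    ∀ EK : Finset (Sym2 V), EK = H.edgeFinset.filter (fun e => ∀ v ∈ e, v ∈ K) →
    ∀ C : Finset N,
      C = K.image vp ∪ EK.image ep ∪
          EK.biUnion (fun e =>
            (Finset.univ.filter (fun v : V => v ∈ e)).image (fun v => bp v e)) →
      C.card = k + 3 * Nat.choose k 2 ∧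
      (∀ v ∈ K, utilAvgEQ G C (vp v) =
        ((3 * (k : ℚ) - 3) / (k : ℚ)) * (Fintype.card N : ℚ)
          - ((C.card : ℚ) - 1 - (3 * (k : ℚ) - 3) / (k : ℚ))) ∧
      (∀ e ∈ EK, utilAvgEQ G C (ep e) =
        2 * (Fintype.card N : ℚ) - ((C.card : ℚ) - 3)) ∧
      (∀ e ∈ EK, ∀ v ∈ e, utilAvgEQ G C (bp v e) =
        (((k : ℚ) + 3) / 3) * (Fintype.card N : ℚ)
          - ((C.card : ℚ) - 1 - ((k : ℚ) + 3) / 3)) ∧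
      Blocks (utilAvgEQ G) Γ C := by
  intro EK hEK C hC
  obtain ⟨hΓv, hΓe, hΓb⟩ := hΓ
  have hvpP : ∀ v : V, vp v ∈ Pv v := fun v => by
    obtain ⟨m, f, hg⟩ := R.dome_v v; exact hg.top_mem
  have hepP : ∀ e ∈ H.edgeSet, ep e ∈ Pe e := fun e he => by
    obtain ⟨m, f, hg⟩ := R.dome_e e he; exact hg.top_mem
  have hbpP : ∀ (v : V), ∀ e ∈ H.edgeSet, v ∈ e → bp v e ∈ Pve v e := fun v e he hv => by
    obtain ⟨m, f, hg⟩ := R.dome_ve v e he hv; exact hg.top_mem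
  have hEKedge : ∀ e ∈ EK, e ∈ H.edgeSet := by
    intro e he; rw [hEK, Finset.mem_filter] at he
    exact (SimpleGraph.mem_edgeFinset).1 he.1
  have hEKK : ∀ e ∈ EK, ∀ v ∈ e, v ∈ K := by
    intro e he; rw [hEK, Finset.mem_filter] at he; exact he.2
  -- distinctness of tops
  have hvp_inj : ∀ v w : V, vp v = vp w → v = w := by
    intro v w h
    by_contra hne
    exact Finset.disjoint_left.1 (R.disj_vv v w hne) (hvpP v) (h ▸ hvpP w)
  have hvp_ne_ep : ∀ (v : V), ∀ e ∈ H.edgeSet, vp v ≠ ep e := by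
    intro v e he h
    exact Finset.disjoint_left.1 (R.disj_v_e v e he) (hvpP v) (h ▸ hepP e he)
  have hvp_ne_bp : ∀ (v w : V), ∀ f ∈ H.edgeSet, w ∈ f → vp v ≠ bp w f := by
    intro v w f hf hw h
    exact Finset.disjoint_left.1 (R.disj_v_b v w f hf hw) (hvpP v) (h ▸ hbpP w f hf hw)
  have hep_inj : ∀ e ∈ H.edgeSet, ∀ f ∈ H.edgeSet, ep e = ep f → e = f := by
    intro e he f hf h
    by_contra hne
    exact Finset.disjoint_left.1 (R.disj_ee e he f hf hne) (hepP e he) (h ▸ hepP f hf)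
  have hep_ne_bp : ∀ e ∈ H.edgeSet, ∀ (w : V), ∀ f ∈ H.edgeSet, w ∈ f → ep e ≠ bp w f := by
    intro e he w f hf hw h
    exact Finset.disjoint_left.1 (R.disj_e_b e he w f hf hw) (hepP e he) (h ▸ hbpP w f hf hw)
  have hbp_inj : ∀ (v : V), ∀ e ∈ H.edgeSet, v ∈ e → ∀ (w : V), ∀ f ∈ H.edgeSet, w ∈ f →
      bp v e = bp w f → v = w ∧ e = f := by
    intro v e he hv w f hf hw h
    by_contra hne
    have hne' : (v, e) ≠ (w, f) := by
      intro hp; apply hne; exact ⟨congrArg Prod.fst hp, congrArg Prod.snd hp⟩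
    exact Finset.disjoint_left.1 (R.disj_bb v e he hv w f hf hw hne')
      (hbpP v e he hv) (h ▸ hbpP w f hf hw)
  -- membership characterization
  have hmemC : ∀ x : N, x ∈ C ↔ ((∃ v ∈ K, vp v = x) ∨ (∃ e ∈ EK, ep e = x) ∨
      (∃ e ∈ EK, ∃ v, v ∈ e ∧ bp v e = x)) := by
    intro x
    simp only [hC, Finset.mem_union, Finset.mem_image, Finset.mem_biUnion,
      Finset.mem_filter, Finset.mem_univ, true_and]
    constructor
    · rintro ((⟨v, hv, rfl⟩ | ⟨e, he, rfl⟩) | ⟨e, he, v, hv, rfl⟩)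
      · exact Or.inl ⟨v, hv, rfl⟩
      · exact Or.inr (Or.inl ⟨e, he, rfl⟩)
      · exact Or.inr (Or.inr ⟨e, he, v, hv, rfl⟩)
    · rintro (⟨v, hv, rfl⟩ | ⟨e, he, rfl⟩ | ⟨e, he, v, hv, rfl⟩)
      · exact Or.inl (Or.inl ⟨v, hv, rfl⟩)
      · exact Or.inl (Or.inr ⟨e, he, rfl⟩)
      · exact Or.inr ⟨e, he, v, hv, rfl⟩
  -- elements of C lying in a gadget are its top
  have hCPv : ∀ x ∈ C, ∀ w : V, x ∈ Pv w → x = vp w := by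
    intro x hx w hxw
    rcases (hmemC x).1 hx with ⟨v, hv, rfl⟩ | ⟨e, he, rfl⟩ | ⟨e, he, v, hv, rfl⟩
    · by_contra hne
      have hvw : v ≠ w := fun h => hne (by rw [h])
      exact Finset.disjoint_left.1 (R.disj_vv v w hvw) (hvpP v) hxw
    · exact absurd hxw (Finset.disjoint_right.1 (R.disj_v_e w _ (hEKedge e he)) (hepP _ (hEKedge e he)))
    · exact absurd hxw (Finset.disjoint_right.1 (R.disj_v_b w v _ (hEKedge e he) hv)
        (hbpP v _ (hEKedge e he) hv))
  have hCPe : ∀ x ∈ C, ∀ f ∈ H.edgeSet, x ∈ Pe f → x = ep f := by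
    intro x hx f hf hxf
    rcases (hmemC x).1 hx with ⟨v, hv, rfl⟩ | ⟨e, he, rfl⟩ | ⟨e, he, v, hv, rfl⟩
    · exact absurd hxf (Finset.disjoint_left.1 (R.disj_v_e v f hf) (hvpP v))
    · by_contra hne
      have hef : e ≠ f := fun h => hne (by rw [h])
      exact Finset.disjoint_left.1 (R.disj_ee e (hEKedge e he) f hf hef) (hepP _ (hEKedge e he)) hxf
    · exact absurd hxf (Finset.disjoint_right.1 (R.disj_e_b f hf v _ (hEKedge e he) hv)
        (hbpP v _ (hEKedge e he) hv))
  have hCPve : ∀ x ∈ C, ∀ (w : V), ∀ f ∈ H.edgeSet, w ∈ f → x ∈ Pve w f → x = bp w f := by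
    intro x hx w f hf hw hxf
    rcases (hmemC x).1 hx with ⟨v, hv, rfl⟩ | ⟨e, he, rfl⟩ | ⟨e, he, v, hv, rfl⟩
    · exact absurd hxf (Finset.disjoint_left.1 (R.disj_v_b v w f hf hw) (hvpP v))
    · exact absurd hxf (Finset.disjoint_left.1 (R.disj_e_b e (hEKedge e he) w f hf hw)
        (hepP _ (hEKedge e he)))
    · by_contra hne
      have hp : (v, e) ≠ (w, f) := by
        intro hp
        exact hne (by rw [show v = w from congrArg Prod.fst hp, show e = f from congrArg Prod.snd hp])
      exact Finset.disjoint_left.1 (R.disj_bb v e (hEKedge e he) hv w f hf hw hp)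
        (hbpP v _ (hEKedge e he) hv) hxf
  -- friend sets inside C
  have hFvp : ∀ v ∈ K, friendsIn G C (vp v) =
      (EK.filter (fun e => v ∈ e)).image (fun e => bp v e) := by
    intro v hv
    ext y
    simp only [mem_friendsIn, Finset.mem_image, Finset.mem_filter]
    constructor
    · rintro ⟨hyC, hadj⟩
      rcases R.adj_cases _ _ hadj with ⟨w, hx, hy⟩ | ⟨f, hf, hx, hy⟩ |
        ⟨w, f, hf, hwf, hx, hy⟩ | ⟨w, f, hf, hwf, (⟨hx, hy⟩ | ⟨hy, hx⟩)⟩ |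
        ⟨w, f, hf, hwf, (⟨hx, hy⟩ | ⟨hy, hx⟩)⟩
      · -- both in Pv w
        have hvw : v = w := by
          by_contra hne
          exact Finset.disjoint_left.1 (R.disj_vv v w hne) (hvpP v) hx
        subst hvw
        exact absurd (hCPv y hyC v hy).symm hadj.ne
      · exact absurd hx (Finset.disjoint_left.1 (R.disj_v_e v f hf) (hvpP v))
      · exact absurd hx (Finset.disjoint_left.1 (R.disj_v_b v w f hf hwf) (hvpP v))
      · exact absurd hx (hvp_ne_bp v w f hf hwf)
      · -- y = bp w f, vp v = vp w
        have hvw : v = w := hvp_inj v w hx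
        subst hvw
        have hfEK : f ∈ EK := by
          rcases (hmemC y).1 hyC with ⟨u, hu, hy'⟩ | ⟨g, hg, hy'⟩ | ⟨g, hg, u, hu, hy'⟩
          · exact absurd (hy'.trans hy) (hvp_ne_bp u v f hf hwf)
          · exact absurd (hy'.trans hy) (hep_ne_bp g (hEKedge g hg) v f hf hwf)
          · obtain ⟨-, hgf⟩ := hbp_inj u g (hEKedge g hg) hu v f hf hwf (hy'.trans hy)
            exact hgf ▸ hg
        exact ⟨f, ⟨hfEK, hwf⟩, hy.symm⟩
      · exact absurd hx (hvp_ne_bp v w f hf hwf)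
      · exact absurd hx (hvp_ne_ep v f hf)
    · rintro ⟨e, ⟨he, hve⟩, rfl⟩
      exact ⟨(hmemC _).2 (Or.inr (Or.inr ⟨e, he, v, hve, rfl⟩)),
        (R.adj_bv v e (hEKedge e he) hve).symm⟩
  have hFep : ∀ e ∈ EK, friendsIn G C (ep e) =
      (Finset.univ.filter (fun v : V => v ∈ e)).image (fun v => bp v e) := by
    intro e he
    have heS := hEKedge e he
    ext y
    simp only [mem_friendsIn, Finset.mem_image, Finset.mem_filter, Finset.mem_univ, true_and]
    constructor
    · rintro ⟨hyC, hadj⟩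
      rcases R.adj_cases _ _ hadj with ⟨w, hx, hy⟩ | ⟨f, hf, hx, hy⟩ |
        ⟨w, f, hf, hwf, hx, hy⟩ | ⟨w, f, hf, hwf, (⟨hx, hy⟩ | ⟨hy, hx⟩)⟩ |
        ⟨w, f, hf, hwf, (⟨hx, hy⟩ | ⟨hy, hx⟩)⟩
      · exact absurd hx (Finset.disjoint_right.1 (R.disj_v_e w e heS) (hepP e heS))
      · have hef : e = f := by
          by_contra hne
          exact Finset.disjoint_left.1 (R.disj_ee e heS f hf hne) (hepP e heS) hx
        subst hef
        exact absurd (hCPe y hyC e heS hy).symm hadj.ne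
      · exact absurd hx (Finset.disjoint_left.1 (R.disj_e_b e heS w f hf hwf) (hepP e heS))
      · exact absurd hx (hep_ne_bp e heS w f hf hwf)
      · exact (hvp_ne_ep w e heS hx.symm).elim
      · exact absurd hx (hep_ne_bp e heS w f hf hwf)
      · -- y = bp w f, ep e = ep f
        have hef : e = f := hep_inj e heS f hf hx
        subst hef
        exact ⟨w, hwf, hy.symm⟩
    · rintro ⟨w, hwe, rfl⟩
      exact ⟨(hmemC _).2 (Or.inr (Or.inr ⟨e, he, w, hwe, rfl⟩)),
        (R.adj_be w e heS hwe).symm⟩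
  have hFbp : ∀ e ∈ EK, ∀ v, v ∈ e → friendsIn G C (bp v e) = {vp v, ep e} := by
    intro e he v hv
    have heS := hEKedge e he
    ext y
    simp only [mem_friendsIn, Finset.mem_insert, Finset.mem_singleton]
    constructor
    · rintro ⟨hyC, hadj⟩
      rcases R.adj_cases _ _ hadj with ⟨w, hx, hy⟩ | ⟨f, hf, hx, hy⟩ |
        ⟨w, f, hf, hwf, hx, hy⟩ | ⟨w, f, hf, hwf, (⟨hx, hy⟩ | ⟨hy, hx⟩)⟩ |
        ⟨w, f, hf, hwf, (⟨hx, hy⟩ | ⟨hy, hx⟩)⟩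
      · exact absurd hx (Finset.disjoint_right.1 (R.disj_v_b w v e heS hv) (hbpP v e heS hv))
      · exact absurd hx (Finset.disjoint_right.1 (R.disj_e_b f hf v e heS hv) (hbpP v e heS hv))
      · have hbC : bp v e ∈ C := (hmemC _).2 (Or.inr (Or.inr ⟨e, he, v, hv, rfl⟩))
        obtain ⟨hvw, hef⟩ := hbp_inj v e heS hv w f hf hwf (hCPve _ hbC w f hf hwf hx)
        subst hvw; subst hef
        exact absurd (hCPve y hyC v e heS hv hy).symm hadj.ne
      · obtain ⟨hvw, hef⟩ := hbp_inj v e heS hv w f hf hwf hx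
        subst hvw; subst hef
        exact Or.inl hy
      · exact absurd hx.symm (hvp_ne_bp w v e heS hv)
      · obtain ⟨hvw, hef⟩ := hbp_inj v e heS hv w f hf hwf hx
        subst hef
        exact Or.inr hy
      · exact absurd hx.symm (hep_ne_bp f hf v e heS hv)
    · rintro (rfl | rfl)
      · exact ⟨(hmemC _).2 (Or.inl ⟨v, hEKK e he v hv, rfl⟩), R.adj_bv v e heS hv⟩
      · exact ⟨(hmemC _).2 (Or.inr (Or.inl ⟨e, he, rfl⟩)), R.adj_be v e heS hv⟩
  -- cardinalities
  have hKcard : K.card = k := hK.card_eq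
  have hcardfil2 : ∀ e ∈ EK, (Finset.univ.filter (fun v : V => v ∈ e)).card = 2 := by
    intro e he
    have heS := hEKedge e he
    clear he
    revert heS
    induction e using Sym2.ind with
    | _ a b =>
      intro heS
      have hadj : H.Adj a b := H.mem_edgeSet.1 heS
      have hset : (Finset.univ.filter (fun v : V => v ∈ (s(a, b) : Sym2 V))) = {a, b} := by
        ext v; simp [Sym2.mem_iff]
      rw [hset, Finset.card_pair hadj.ne]
  have hKfil : ∀ v ∈ K, EK.filter (fun e => v ∈ e) = (K.erase v).image (fun w => s(v, w)) := by
    intro v hv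
    ext e
    simp only [Finset.mem_filter, Finset.mem_image, Finset.mem_erase]
    constructor
    · rintro ⟨he, hve⟩
      have heS := hEKedge e he
      have hK2 := hEKK e he
      clear he
      revert hve heS hK2
      induction e using Sym2.ind with
      | _ a b =>
        intro hve heS hK2
        have hadj : H.Adj a b := H.mem_edgeSet.1 heS
        rcases Sym2.mem_iff.1 hve with hva | hvb
        · exact ⟨b, ⟨fun h => hadj.ne (hva.symm.trans h.symm), hK2 b (Sym2.mem_mk_right a b)⟩,
            by rw [hva]⟩
        · exact ⟨a, ⟨fun h => hadj.ne (h.trans hvb), hK2 a (Sym2.mem_mk_left a b)⟩,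
            by rw [hvb, Sym2.eq_swap]⟩
    · rintro ⟨w, ⟨hwv, hwK⟩, rfl⟩
      have hadj : H.Adj v w := hK.1 (Finset.mem_coe.2 hv) (Finset.mem_coe.2 hwK) (Ne.symm hwv)
      refine ⟨?_, Sym2.mem_mk_left v w⟩
      rw [hEK, Finset.mem_filter, SimpleGraph.mem_edgeFinset]
      refine ⟨H.mem_edgeSet.2 hadj, ?_⟩
      intro u hu
      rcases Sym2.mem_iff.1 hu with rfl | rfl
      · exact hv
      · exact hwK
  have hEKfilcard : ∀ v ∈ K, (EK.filter (fun e => v ∈ e)).card = k - 1 := by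
    intro v hv
    rw [hKfil v hv, Finset.card_image_of_injOn (fun a _ b _ hab => Sym2.congr_right.1 hab),
      Finset.card_erase_of_mem hv, hKcard]
  have hEKcard : EK.card = Nat.choose k 2 := by
    have h1 : ∀ e ∈ EK, (K.filter (fun v => v ∈ e)).card = 2 := by
      intro e he
      have : K.filter (fun v => v ∈ e) = Finset.univ.filter (fun v : V => v ∈ e) := by
        ext v
        simp only [Finset.mem_filter, Finset.mem_univ, true_and]
        exact ⟨fun h => h.2, fun h => ⟨hEKK e he v h, h⟩⟩
      rw [this]
      exact hcardfil2 e he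
    have hdc : ∑ e ∈ EK, (K.filter (fun v => v ∈ e)).card
        = ∑ v ∈ K, (EK.filter (fun e => v ∈ e)).card := by
      simp_rw [Finset.card_filter]
      exact Finset.sum_comm
    rw [Finset.sum_congr rfl h1, Finset.sum_const, Finset.sum_congr rfl hEKfilcard,
      Finset.sum_const, hKcard, smul_eq_mul, smul_eq_mul] at hdc
    rw [Nat.choose_two_right, ← hdc, Nat.mul_div_cancel _ (by norm_num)]
  have hAcard : (K.image vp).card = k := by
    rw [Finset.card_image_of_injOn (fun a _ b _ h => hvp_inj a b h), hKcard]
  have hBcard : (EK.image ep).card = EK.card :=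
    Finset.card_image_of_injOn (fun a ha b hb h =>
      hep_inj a (hEKedge a (Finset.mem_coe.1 ha)) b (hEKedge b (Finset.mem_coe.1 hb)) h)
  have himgcard : ∀ e ∈ EK, ((Finset.univ.filter (fun v : V => v ∈ e)).image
      (fun v => bp v e)).card = 2 := by
    intro e he
    rw [Finset.card_image_of_injOn, hcardfil2 e he]
    intro a ha b hb hab
    have ha' : a ∈ e := by simpa using ha
    have hb' : b ∈ e := by simpa using hb
    exact (hbp_inj a e (hEKedge e he) ha' b e (hEKedge e he) hb' hab).1
  have hDcard : (EK.biUnion (fun e => (Finset.univ.filter (fun v : V => v ∈ e)).image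
      (fun v => bp v e))).card = 2 * EK.card := by
    rw [Finset.card_biUnion]
    · rw [Finset.sum_congr rfl himgcard, Finset.sum_const, smul_eq_mul, mul_comm]
    · intro e he f hf hef
      rw [Function.onFun, Finset.disjoint_left]
      rintro x hx1 hx2
      simp only [Finset.mem_image, Finset.mem_filter, Finset.mem_univ, true_and] at hx1 hx2
      obtain ⟨a, ha, rfl⟩ := hx1
      obtain ⟨b, hb, hba⟩ := hx2
      exact hef ((hbp_inj b f (hEKedge f hf) hb a e (hEKedge e he) ha hba).2).symm
  have hABdisj : Disjoint (K.image vp) (EK.image ep) := by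
    rw [Finset.disjoint_left]
    rintro x hx1 hx2
    simp only [Finset.mem_image] at hx1 hx2
    obtain ⟨v, hv, rfl⟩ := hx1
    obtain ⟨e, he, hvo⟩ := hx2
    exact hvp_ne_ep v e (hEKedge e he) hvo.symm
  have hADdisj : Disjoint (K.image vp) (EK.biUnion (fun e =>
      (Finset.univ.filter (fun v : V => v ∈ e)).image (fun v => bp v e))) := by
    rw [Finset.disjoint_left]
    rintro x hx1 hx2
    simp only [Finset.mem_image, Finset.mem_biUnion, Finset.mem_filter,
      Finset.mem_univ, true_and] at hx1 hx2
    obtain ⟨v, hv, rfl⟩ := hx1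
    obtain ⟨e, he, w, hw, hb⟩ := hx2
    exact hvp_ne_bp v w e (hEKedge e he) hw hb.symm
  have hBDdisj : Disjoint (EK.image ep) (EK.biUnion (fun e =>
      (Finset.univ.filter (fun v : V => v ∈ e)).image (fun v => bp v e))) := by
    rw [Finset.disjoint_left]
    rintro x hx1 hx2
    simp only [Finset.mem_image, Finset.mem_biUnion, Finset.mem_filter,
      Finset.mem_univ, true_and] at hx1 hx2
    obtain ⟨e, he, rfl⟩ := hx1
    obtain ⟨f, hf, w, hw, hb⟩ := hx2
    exact hep_ne_bp e (hEKedge e he) w f (hEKedge f hf) hw hb.symm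
  have hCcard : C.card = k + 3 * Nat.choose k 2 := by
    rw [hC, Finset.card_union_of_disjoint (Finset.disjoint_union_left.2 ⟨hADdisj, hBDdisj⟩),
      Finset.card_union_of_disjoint hABdisj, hAcard, hBcard, hDcard, hEKcard]
    ring
  -- fvals
  have hcast1 : ((k - 1 : ℕ) : ℚ) = (k : ℚ) - 1 := by
    rw [Nat.cast_sub (by omega : 1 ≤ k), Nat.cast_one]
  have hfvp_card : ∀ v ∈ K, (friendsIn G C (vp v)).card = k - 1 := by
    intro v hv
    rw [hFvp v hv, Finset.card_image_of_injOn, hEKfilcard v hv]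
    intro a ha b hb hab
    have ha' : a ∈ EK ∧ v ∈ a := by simpa using ha
    have hb' : b ∈ EK ∧ v ∈ b := by simpa using hb
    exact (hbp_inj v a (hEKedge a ha'.1) ha'.2 v b (hEKedge b hb'.1) hb'.2 hab).2
  have hfv_vp : ∀ v ∈ K, (fval G C (vp v) : ℚ)
      = (Fintype.card N : ℚ) * ((k : ℚ) - 1) - ((C.card : ℚ) - 1 - ((k : ℚ) - 1)) := by
    intro v hv
    have hvC : vp v ∈ C := (hmemC _).2 (Or.inl ⟨v, hv, rfl⟩)
    have heq := fval_eq_of_mem G C (vp v) hvC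
    rw [hfvp_card v hv] at heq
    rw [heq]
    push_cast [Nat.cast_sub (show 1 ≤ k by omega)]
    ring
  have hfv_bp : ∀ e ∈ EK, ∀ v, v ∈ e → (fval G C (bp v e) : ℚ)
      = 2 * (Fintype.card N : ℚ) - ((C.card : ℚ) - 3) := by
    intro e he v hv
    have hbC : bp v e ∈ C := (hmemC _).2 (Or.inr (Or.inr ⟨e, he, v, hv, rfl⟩))
    have h2 : (friendsIn G C (bp v e)).card = 2 := by
      rw [hFbp e he v hv]
      exact Finset.card_pair (hvp_ne_ep v e (hEKedge e he))
    have heq := fval_eq_of_mem G C (bp v e) hbC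
    rw [h2] at heq
    rw [heq]; push_cast; ring
  have hfv_ep : ∀ e ∈ EK, (fval G C (ep e) : ℚ)
      = 2 * (Fintype.card N : ℚ) - ((C.card : ℚ) - 3) := by
    intro e he
    have hC' : ep e ∈ C := (hmemC _).2 (Or.inr (Or.inl ⟨e, he, rfl⟩))
    have h2 : (friendsIn G C (ep e)).card = 2 := by
      rw [hFep e he]; exact himgcard e he
    have heq := fval_eq_of_mem G C (ep e) hC'
    rw [h2] at heq
    rw [heq]; push_cast; ring
  -- utilities inside C
  have hk0 : (k : ℚ) ≠ 0 := Nat.cast_ne_zero.2 (by omega)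
  have hutil_vp : ∀ v ∈ K, utilAvgEQ G C (vp v) =
      ((3 * (k : ℚ) - 3) / (k : ℚ)) * (Fintype.card N : ℚ)
        - ((C.card : ℚ) - 1 - (3 * (k : ℚ) - 3) / (k : ℚ)) := by
    intro v hv
    have hnotmem : vp v ∉ (EK.filter (fun e => v ∈ e)).image (fun e => bp v e) := by
      simp only [Finset.mem_image, Finset.mem_filter, not_exists]
      rintro e ⟨⟨he, hve⟩, hb⟩
      exact hvp_ne_bp v v e (hEKedge e he) hve hb.symm
    have hinj2 : ∀ a ∈ EK.filter (fun e => v ∈ e), ∀ b ∈ EK.filter (fun e => v ∈ e),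
        bp v a = bp v b → a = b := by
      intro a ha b hb hab
      rw [Finset.mem_filter] at ha hb
      exact (hbp_inj v a (hEKedge a ha.1) ha.2 v b (hEKedge b hb.1) hb.2 hab).2
    have hsum : ∑ e ∈ EK.filter (fun e => v ∈ e), (fval G C (bp v e) : ℚ)
        = ((k : ℚ) - 1) * (2 * (Fintype.card N : ℚ) - ((C.card : ℚ) - 3)) := by
      rw [Finset.sum_congr rfl (fun e heE => hfv_bp e (Finset.mem_filter.1 heE).1 v
        (Finset.mem_filter.1 heE).2), Finset.sum_const, hEKfilcard v hv, nsmul_eq_mul, hcast1]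
    have hinjOn : Set.InjOn (fun e => bp v e) ↑(EK.filter (fun e => v ∈ e)) := by
      intro a ha b hb hab
      exact hinj2 a (Finset.mem_coe.1 ha) b (Finset.mem_coe.1 hb) hab
    unfold utilAvgEQ
    rw [hFvp v hv, Finset.sum_insert hnotmem, Finset.card_insert_of_notMem hnotmem,
      Finset.sum_image hinj2, hsum, Finset.card_image_of_injOn hinjOn, hEKfilcard v hv,
      hfv_vp v hv, show (k - 1) + 1 = k from by omega]
    field_simp
    ring
  have hutil_ep : ∀ e ∈ EK, utilAvgEQ G C (ep e) =
      2 * (Fintype.card N : ℚ) - ((C.card : ℚ) - 3) := by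
    intro e he
    have heS := hEKedge e he
    have hnotmem : ep e ∉ (Finset.univ.filter (fun v : V => v ∈ e)).image (fun v => bp v e) := by
      simp only [Finset.mem_image, Finset.mem_filter, Finset.mem_univ, true_and, not_exists]
      rintro w ⟨hw, hb⟩
      exact hep_ne_bp e heS w e heS hw hb.symm
    have hinj2 : ∀ a ∈ Finset.univ.filter (fun v : V => v ∈ e),
        ∀ b ∈ Finset.univ.filter (fun v : V => v ∈ e), bp a e = bp b e → a = b := by
      intro a ha b hb hab
      rw [Finset.mem_filter] at ha hb
      exact (hbp_inj a e heS ha.2 b e heS hb.2 hab).1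
    have hsum : ∑ v ∈ Finset.univ.filter (fun v : V => v ∈ e), (fval G C (bp v e) : ℚ)
        = 2 * (2 * (Fintype.card N : ℚ) - ((C.card : ℚ) - 3)) := by
      rw [Finset.sum_congr rfl (fun w hw => hfv_bp e he w (Finset.mem_filter.1 hw).2),
        Finset.sum_const, hcardfil2 e he, nsmul_eq_mul]
      norm_num
    have hinjOn : Set.InjOn (fun v => bp v e) ↑(Finset.univ.filter (fun v : V => v ∈ e)) := by
      intro a ha b hb hab
      exact hinj2 a (Finset.mem_coe.1 ha) b (Finset.mem_coe.1 hb) hab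
    unfold utilAvgEQ
    rw [hFep e he, Finset.sum_insert hnotmem, Finset.card_insert_of_notMem hnotmem,
      Finset.sum_image hinj2, hsum, Finset.card_image_of_injOn hinjOn, hcardfil2 e he,
      hfv_ep e he]
    push_cast
    ring
  have hutil_bp : ∀ e ∈ EK, ∀ v ∈ e, utilAvgEQ G C (bp v e) =
      (((k : ℚ) + 3) / 3) * (Fintype.card N : ℚ)
        - ((C.card : ℚ) - 1 - ((k : ℚ) + 3) / 3) := by
    intro e he v hv
    have heS := hEKedge e he
    have hvK := hEKK e he v hv
    have hne1 : bp v e ≠ vp v := (hvp_ne_bp v v e heS hv).symm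
    have hne2 : bp v e ≠ ep e := (hep_ne_bp e heS v e heS hv).symm
    have hne3 : vp v ≠ ep e := hvp_ne_ep v e heS
    have hnot : bp v e ∉ ({vp v, ep e} : Finset N) := by simp [hne1, hne2]
    unfold utilAvgEQ
    rw [hFbp e he v hv, Finset.sum_insert hnot, Finset.card_insert_of_notMem hnot,
      Finset.card_pair hne3, Finset.sum_pair hne3, hfv_bp e he v hv, hfv_vp v hvK,
      hfv_ep e he]
    push_cast
    field_simp
    ring
  refine ⟨hCcard, hutil_vp, hutil_ep, hutil_bp, ?_, ?_⟩
  · -- nonempty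
    have hKne : K.Nonempty := by rw [← Finset.card_pos, hKcard]; omega
    obtain ⟨v, hv⟩ := hKne
    exact ⟨vp v, (hmemC _).2 (Or.inl ⟨v, hv, rfl⟩)⟩
  · intro i hi
    have hn0 : (0 : ℚ) ≤ (Fintype.card N : ℚ) := by positivity
    have hk4 : (4 : ℚ) ≤ (k : ℚ) := by exact_mod_cast hk
    have hkQ : ((avgK' k : ℕ) : ℚ) = (C.card : ℚ) + 1 := by
      have h1 : avgK' k = C.card + 1 := by rw [hCcard]; rfl
      exact_mod_cast congrArg (fun m : ℕ => (m : ℚ)) h1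
    rcases (hmemC i).1 hi with ⟨v, hv, rfl⟩ | ⟨e, he, rfl⟩ | ⟨e, he, v, hv, rfl⟩
    · rw [hΓv v (vp v) (hvpP v), hutil_vp v hv, dome_util_top (R.dome_v v), hcast1, hkQ]
      have key : (((3 * (k : ℚ) - 3) / (k : ℚ)) * (Fintype.card N : ℚ)
            - ((C.card : ℚ) - 1 - (3 * (k : ℚ) - 3) / (k : ℚ)))
          - (((((k : ℚ) - 1) * (Fintype.card N : ℚ)
              - (((C.card : ℚ) + 1) - 1 - ((k : ℚ) - 1)))
            + ((k : ℚ) - 1) * (2 * (Fintype.card N : ℚ) - (((C.card : ℚ) + 1) - 3)))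
            / (((k : ℚ) - 1) + 1)) = 1 := by
        rw [show ((k : ℚ) - 1) + 1 = (k : ℚ) from by ring]
        field_simp
        ring
      linarith [key]
    · have heS := hEKedge e he
      rw [hΓe e heS (ep e) (hepP e heS), hutil_ep e he,
        dome_util_top (R.dome_e e heS), hkQ]
      push_cast
      linarith
    · have heS := hEKedge e he
      rw [hΓb v e heS hv (bp v e) (hbpP v e heS hv), hutil_bp e he v hv,
        dome_util_top (R.dome_ve v e heS hv), hkQ]
      push_cast
      have hprod : (0 : ℚ) ≤ ((k : ℚ) - 4) * (Fintype.card N : ℚ) :=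
        mul_nonneg (by linarith) hn0
      nlinarith [hprod]
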